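/- Let a > 0, λ₀, λ₁ > 0, α ∈ (0,1), and let U be uniform on (0,1). Define the proxy p-value P(n) = 1 − Φ(a·√n + Φ^{-1}(U)·λ₁/λ₀). Then for every n > 0, P(P(n) ≤ α) = 1 − Φ((Φ^{-1}(1−α) − a·√n)·λ₀/λ₁), and consequently lim_{n→∞} P(P(n) ≤ α) = 1. -/

import Mathlib

open Filter MeasureTheory Set

/-- Standard normal CDF. -/
noncomputable def Phi (x : ℝ) : ℝ :=
  ∫ t in Set.Iio x, (Real.sqrt (2 * Real.pi))⁻¹ * Real.exp (-t ^ 2 / 2)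

/-- Standard normal density. -/
noncomputable def stdPdf (x : ℝ) : ℝ := (Real.sqrt (2 * Real.pi))⁻¹ * Real.exp (-x ^ 2 / 2)

/-- Standard normal quantile function. -/
noncomputable def PhiInv : ℝ → ℝ := Function.invFun Phi

/-- Logit function. -/
noncomputable def logit (x : ℝ) : ℝ := Real.log x - Real.log (1 - x)

lemma stdPdf_pos (x : ℝ) : 0 < stdPdf x := by
  unfold stdPdf
  positivity

lemma integrable_stdPdf : Integrable stdPdf := by
  have h : Integrable (fun x : ℝ => Real.exp (-(1/2) * x ^ 2)) := integrable_exp_neg_mul_sq (by norm_num)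
  have := h.const_mul (Real.sqrt (2 * Real.pi))⁻¹
  refine this.congr (Eventually.of_forall fun x => ?_)
  unfold stdPdf
  ring_nf

lemma integral_stdPdf : ∫ x, stdPdf x = 1 := by
  have h : ∫ x : ℝ, Real.exp (-(1/2) * x ^ 2) = Real.sqrt (Real.pi / (1/2)) :=
    integral_gaussian (1/2)
  have h2 : ∫ x, stdPdf x = (Real.sqrt (2 * Real.pi))⁻¹ * ∫ x : ℝ, Real.exp (-(1/2) * x ^ 2) := by
    rw [← integral_const_mul]
    congr 1 with x
    unfold stdPdf
    ring_nf
  rw [h2, h]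
  have hpi : (0:ℝ) < Real.pi := Real.pi_pos
  rw [show Real.pi / (1/2) = 2 * Real.pi by ring]
  rw [inv_mul_cancel₀]
  positivity

lemma Phi_eq (x : ℝ) : Phi x = ∫ t in Set.Iio x, stdPdf t := rfl

lemma Phi_eq_Iic (x : ℝ) : Phi x = ∫ t in Set.Iic x, stdPdf t :=
  (integral_Iic_eq_integral_Iio).symm

lemma Phi_strictMono : StrictMono Phi := by
  intro x y hxy
  have h : Phi y - Phi x = ∫ t in x..y, stdPdf t := by
    rw [Phi_eq_Iic, Phi_eq_Iic, intervalIntegral.integral_Iic_sub_Iic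
      integrable_stdPdf.integrableOn integrable_stdPdf.integrableOn]
  have hpos : 0 < ∫ t in x..y, stdPdf t :=
    intervalIntegral.intervalIntegral_pos_of_pos integrable_stdPdf.intervalIntegrable stdPdf_pos hxy
  linarith
 
lemma Phi_continuous : Continuous Phi := by
  have h : Phi = fun b => (∫ t in Set.Iic (0:ℝ), stdPdf t) + ∫ t in (0:ℝ)..b, stdPdf t := by
    funext b
    rw [Phi_eq_Iic]
    have := intervalIntegral.integral_Iic_sub_Iic (μ := volume) (f := stdPdf)
      integrable_stdPdf.integrableOn integrable_stdPdf.integrableOn (a := 0) (b := b)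
    linarith
  rw [h]
  exact continuous_const.add (integrable_stdPdf.continuous_primitive 0)

lemma Phi_seq_top : Tendsto (fun n : ℕ => Phi n) atTop (nhds 1) := by
  have hU : (⋃ n : ℕ, Set.Iio ((n:ℝ))) = Set.univ := by
    ext x
    simp only [Set.mem_iUnion, Set.mem_Iio, Set.mem_univ, iff_true]
    exact exists_nat_gt x
  have := tendsto_setIntegral_of_monotone (μ := volume) (f := stdPdf)
    (s := fun n : ℕ => Set.Iio ((n:ℝ))) (fun n => measurableSet_Iio)
    (fun i j hij => Set.Iio_subset_Iio (by exact_mod_cast hij))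
    (by rw [hU]; exact integrable_stdPdf.integrableOn)
  rw [hU] at this
  simp only [Measure.restrict_univ] at this
  rw [integral_stdPdf] at this
  exact this

lemma Phi_seq_bot : Tendsto (fun n : ℕ => Phi (-(n:ℝ))) atTop (nhds 0) := by
  have hI : (⋂ n : ℕ, Set.Iio (-(n:ℝ))) = ∅ := by
    ext x
    simp only [Set.mem_iInter, Set.mem_Iio, Set.mem_empty_iff_false, iff_false, not_forall, not_lt]
    obtain ⟨n, hn⟩ := exists_nat_ge (-x)
    exact ⟨n, by linarith⟩
  have := tendsto_setIntegral_of_antitone (μ := volume) (f := stdPdf)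
    (s := fun n : ℕ => Set.Iio (-(n:ℝ))) (fun n => measurableSet_Iio)
    (fun i j hij => Set.Iio_subset_Iio (by simp; exact_mod_cast hij))
    ⟨0, integrable_stdPdf.integrableOn⟩
  rw [hI] at this
  simpa [Phi_eq] using this

lemma Phi_pos (x : ℝ) : 0 < Phi x := by
  rw [Phi_eq]
  rw [setIntegral_pos_iff_support_of_nonneg_ae
    (Eventually.of_forall fun t => (stdPdf_pos t).le) integrable_stdPdf.integrableOn]
  have : Function.support stdPdf = Set.univ := by
    ext t; simp [Function.mem_support, (stdPdf_pos t).ne']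
  rw [this, Set.univ_inter]
  simp [Real.volume_Iio]

lemma Phi_le_one (x : ℝ) : Phi x ≤ 1 := by
  refine ge_of_tendsto Phi_seq_top ?_
  obtain ⟨n, hn⟩ := exists_nat_ge x
  exact eventually_atTop.2 ⟨n, fun m hm => Phi_strictMono.monotone (hn.trans (Nat.cast_le.mpr hm))⟩

lemma Phi_lt_one (x : ℝ) : Phi x < 1 :=
  lt_of_lt_of_le (Phi_strictMono (lt_add_one x)) (Phi_le_one (x+1))

lemma Phi_tendsto_top : Tendsto Phi atTop (nhds 1) := by
  rw [tendsto_order]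
  constructor
  · intro b hb
    have : ∀ᶠ n : ℕ in atTop, b < Phi n := (Phi_seq_top.eventually_const_lt hb)
    obtain ⟨n, hn⟩ := this.exists
    filter_upwards [eventually_ge_atTop ((n:ℝ))] with x hx
    exact hn.trans_le (Phi_strictMono.monotone hx)
  · intro b hb
    filter_upwards with x
    exact (Phi_lt_one x).trans hb

lemma Phi_tendsto_bot : Tendsto Phi atBot (nhds 0) := by
  rw [tendsto_order]
  constructor
  · intro b hb
    filter_upwards with x
    exact hb.trans (Phi_pos x)
  · intro b hb
    have : ∀ᶠ n : ℕ in atTop, Phi (-(n:ℝ)) < b := (Phi_seq_bot.eventually_lt_const hb)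
    obtain ⟨n, hn⟩ := this.exists
    filter_upwards [eventually_le_atBot (-(n:ℝ))] with x hx
    exact (Phi_strictMono.monotone hx).trans_lt hn

lemma Phi_surj {u : ℝ} (hu : u ∈ Set.Ioo (0:ℝ) 1) : ∃ x, Phi x = u := by
  obtain ⟨x₁, hx₁⟩ := (Phi_tendsto_bot.eventually_lt_const hu.1).exists
  obtain ⟨x₂, hx₂⟩ := (Phi_tendsto_top.eventually_const_lt hu.2).exists
  have := intermediate_value_univ x₁ x₂ Phi_continuous
  obtain ⟨x, hx⟩ := this ⟨hx₁.le, hx₂.le⟩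
  exact ⟨x, hx⟩

lemma Phi_PhiInv {u : ℝ} (hu : u ∈ Set.Ioo (0:ℝ) 1) : Phi (PhiInv u) = u :=
  Function.invFun_eq (Phi_surj hu)

theorem stmt10 (a lam0 lam1 α : ℝ) (ha : 0 < a) (h0 : 0 < lam0) (h1 : 0 < lam1)
    (hα : α ∈ Set.Ioo (0 : ℝ) 1) :
    (∀ n : ℝ, 0 < n →
      (MeasureTheory.volume.restrict (Set.Ioo (0 : ℝ) 1))
          {u : ℝ | 1 - Phi (a * Real.sqrt n + PhiInv u * lam1 / lam0) ≤ α}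
        = ENNReal.ofReal (1 - Phi ((PhiInv (1 - α) - a * Real.sqrt n) * lam0 / lam1))) ∧
    Filter.Tendsto
      (fun n : ℝ =>
        (MeasureTheory.volume.restrict (Set.Ioo (0 : ℝ) 1))
          {u : ℝ | 1 - Phi (a * Real.sqrt n + PhiInv u * lam1 / lam0) ≤ α})
      Filter.atTop (nhds 1) := by
  have h1α : (1 - α) ∈ Set.Ioo (0:ℝ) 1 := ⟨by linarith [hα.2], by linarith [hα.1]⟩
  have key : ∀ A : ℝ,
      (MeasureTheory.volume.restrict (Set.Ioo (0 : ℝ) 1))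
          {u : ℝ | 1 - Phi (A + PhiInv u * lam1 / lam0) ≤ α}
        = ENNReal.ofReal (1 - Phi ((PhiInv (1 - α) - A) * lam0 / lam1)) := by
    intro A
    set c := (PhiInv (1 - α) - A) * lam0 / lam1 with hc
    have hset : {u : ℝ | 1 - Phi (A + PhiInv u * lam1 / lam0) ≤ α} ∩ Set.Ioo (0:ℝ) 1
        = Set.Ico (Phi c) 1 := by
      ext u
      simp only [Set.mem_inter_iff, Set.mem_setOf_eq, Set.mem_Ioo, Set.mem_Ico]
      constructor
      · rintro ⟨hcond, hu0, hu1⟩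
        have huIoo : u ∈ Set.Ioo (0:ℝ) 1 := ⟨hu0, hu1⟩
        have h2 : Phi (PhiInv (1 - α)) ≤ Phi (A + PhiInv u * lam1 / lam0) := by
          rw [Phi_PhiInv h1α]; linarith
        have h3 : PhiInv (1 - α) ≤ A + PhiInv u * lam1 / lam0 :=
          Phi_strictMono.le_iff_le.mp h2
        have h4 : c ≤ PhiInv u := by
          rw [hc, div_le_iff₀ h1]
          have h5 : PhiInv (1 - α) - A ≤ PhiInv u * lam1 / lam0 := by linarith
          rw [le_div_iff₀ h0] at h5
          nlinarith
        have h6 : Phi c ≤ Phi (PhiInv u) := Phi_strictMono.monotone h4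
        rw [Phi_PhiInv huIoo] at h6
        exact ⟨h6, hu1⟩
      · rintro ⟨hcu, hu1⟩
        have hu0 : 0 < u := lt_of_lt_of_le (Phi_pos c) hcu
        have huIoo : u ∈ Set.Ioo (0:ℝ) 1 := ⟨hu0, hu1⟩
        have h6 : c ≤ PhiInv u := Phi_strictMono.le_iff_le.mp
          (show Phi c ≤ Phi (PhiInv u) by rw [Phi_PhiInv huIoo]; exact hcu)
        have h4 : PhiInv (1 - α) ≤ A + PhiInv u * lam1 / lam0 := by
          rw [hc, div_le_iff₀ h1] at h6
          have h5 : PhiInv (1 - α) - A ≤ PhiInv u * lam1 / lam0 := by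
            rw [le_div_iff₀ h0]; nlinarith
          linarith
        have h2 : Phi (PhiInv (1 - α)) ≤ Phi (A + PhiInv u * lam1 / lam0) :=
          Phi_strictMono.monotone h4
        rw [Phi_PhiInv h1α] at h2
        refine ⟨by linarith, hu0, hu1⟩
    rw [Measure.restrict_apply' measurableSet_Ioo, hset, Real.volume_Ico]
  constructor
  · intro n _
    exact key (a * Real.sqrt n)
  · have hsqrt : Tendsto Real.sqrt atTop atTop := by
      rw [tendsto_atTop]
      intro b
      filter_upwards [eventually_ge_atTop ((max b 0)^2)] with x hx
      calc b ≤ max b 0 := le_max_left _ _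
        _ = Real.sqrt ((max b 0)^2) := (Real.sqrt_sq (le_max_right _ _)).symm
        _ ≤ Real.sqrt x := Real.sqrt_le_sqrt hx
    have hc : Tendsto (fun n : ℝ => (PhiInv (1 - α) - a * Real.sqrt n) * lam0 / lam1)
        atTop atBot := by
      have h2 : Tendsto (fun n : ℝ => a * Real.sqrt n) atTop atTop :=
        (tendsto_id.const_mul_atTop ha).comp hsqrt
      have h3 : Tendsto (fun n : ℝ => PhiInv (1 - α) - a * Real.sqrt n) atTop atBot := by
        simp only [sub_eq_add_neg]
        exact tendsto_atBot_add_const_left _ _ (tendsto_neg_atBot_iff.mpr h2)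
      have h4 := h3.atBot_mul_const h0
      exact (h4.atBot_div_const h1)
    have hPhi : Tendsto (fun n : ℝ => Phi ((PhiInv (1 - α) - a * Real.sqrt n) * lam0 / lam1))
        atTop (nhds 0) := Phi_tendsto_bot.comp hc
    have hfin : Tendsto (fun n : ℝ =>
        ENNReal.ofReal (1 - Phi ((PhiInv (1 - α) - a * Real.sqrt n) * lam0 / lam1)))
        atTop (nhds 1) := by
      have h7 : Tendsto (fun n : ℝ =>
          1 - Phi ((PhiInv (1 - α) - a * Real.sqrt n) * lam0 / lam1)) atTop (nhds 1) := by
        simpa using (tendsto_const_nhds (x := (1:ℝ)) (f := atTop)).sub hPhi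
      have := (ENNReal.continuous_ofReal.tendsto 1).comp h7
      simpa [Function.comp_def] using this
    exact hfin.congr (fun n => (key (a * Real.sqrt n)).symm)
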